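/- Define h(B) = tr(exp(B ⊙ B*)) − p for B ∈ ℂ^{p×p}, where ⊙ is the entrywise (Hadamard) product and B* is the entrywise complex conjugate. Then h(B) ≥ 0, and h(B) = 0 if and only if the directed graph with edge k → j whenever B_{jk} ≠ 0 is acyclic. -/

import Mathlib

set_option maxHeartbeats 1000000

open Matrix

section aux
open NormedSpace

attribute [local instance] Matrix.linftyOpNormedRing Matrix.linftyOpNormedAlgebra

variable {p : ℕ}

private lemma pow_entry_nonneg (R : Matrix (Fin p) (Fin p) ℝ) (hR : ∀ i j, 0 ≤ R i j) :
    ∀ n i j, 0 ≤ (R ^ n) i j := by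
  intro n
  induction n with
  | zero =>
      intro i j
      rw [pow_zero]
      by_cases h : i = j <;> simp [Matrix.one_apply, h]
  | succ n ih =>
      intro i j
      rw [pow_succ, Matrix.mul_apply]
      exact Finset.sum_nonneg fun k _ => mul_nonneg (ih i k) (hR k j)

private lemma trans_pos (R : Matrix (Fin p) (Fin p) ℝ) (hR : ∀ i j, 0 ≤ R i j) {a b : Fin p}
    (h : Relation.TransGen (fun x y => R y x ≠ 0) a b) : ∃ n, 0 < (R ^ (n + 1)) b a := by
  induction h with
  | single h => exact ⟨0, by simpa [pow_one] using (hR _ _).lt_of_ne (Ne.symm h)⟩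
  | tail hab hbc ih =>
      obtain ⟨n, hn⟩ := ih
      refine ⟨n + 1, ?_⟩
      rw [pow_succ', Matrix.mul_apply]
      refine Finset.sum_pos' (fun k _ => mul_nonneg (hR _ _) (pow_entry_nonneg R hR _ _ _))
        ⟨_, Finset.mem_univ _, mul_pos ((hR _ _).lt_of_ne (Ne.symm hbc)) hn⟩

private lemma entry_trans (R : Matrix (Fin p) (Fin p) ℝ) :
    ∀ n {a b : Fin p}, (R ^ (n + 1)) b a ≠ 0 → Relation.TransGen (fun x y => R y x ≠ 0) a b := by
  intro n
  induction n with
  | zero => intro a b h; rw [pow_one] at h; exact Relation.TransGen.single h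
  | succ n ih =>
      intro a b h
      rw [pow_succ', Matrix.mul_apply] at h
      obtain ⟨k, -, hk⟩ := Finset.exists_ne_zero_of_sum_ne_zero h
      exact Relation.TransGen.tail (ih (right_ne_zero_of_mul hk)) (left_ne_zero_of_mul hk)

private lemma key (p : ℕ) (B : Matrix (Fin p) (Fin p) ℂ) :
    (((NormedSpace.exp (fun j k => B j k * star (B j k)) : Matrix (Fin p) (Fin p) ℂ)).trace
        - p).im = 0 ∧
    0 ≤ (((NormedSpace.exp (fun j k => B j k * star (B j k)) : Matrix (Fin p) (Fin p) ℂ)).trace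
        - p).re ∧
    ((((NormedSpace.exp (fun j k => B j k * star (B j k)) : Matrix (Fin p) (Fin p) ℂ)).trace
        - p) = 0 ↔
      ∀ j : Fin p, ¬ Relation.TransGen (fun k j : Fin p => B j k ≠ 0) j j) := by
  classical
  set R : Matrix (Fin p) (Fin p) ℝ := fun j k => Complex.normSq (B j k) with hRdef
  have hR : ∀ i j, 0 ≤ R i j := fun i j => Complex.normSq_nonneg _
  have hA : (fun j k => B j k * star (B j k) : Matrix (Fin p) (Fin p) ℂ) =
      R.map Complex.ofReal := by
    funext j k
    simp [hRdef, Matrix.map_apply, Complex.star_def, Complex.mul_conj]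
    rfl
  -- exp over ℂ equals entrywise-complexified exp over ℝ
  have hmapcont : Continuous (Complex.ofRealHom.mapMatrix :
      Matrix (Fin p) (Fin p) ℝ →+* Matrix (Fin p) (Fin p) ℂ) :=
    continuous_id.matrix_map Complex.continuous_ofReal
  have hexp : (NormedSpace.exp (fun j k => B j k * star (B j k)) : Matrix (Fin p) (Fin p) ℂ)
      = (NormedSpace.exp R).map Complex.ofReal := by
    rw [hA]
    have := (map_exp (Complex.ofRealHom.mapMatrix :
      Matrix (Fin p) (Fin p) ℝ →+* Matrix (Fin p) (Fin p) ℂ) hmapcont R).symm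
    exact this
  have htrace_map : ((NormedSpace.exp R).map Complex.ofReal).trace
      = ((NormedSpace.exp R).trace : ℂ) := by
    simp [Matrix.trace, Matrix.diag, Matrix.map_apply]
  -- the trace of the real exponential as a tsum
  have hsumm : Summable fun n : ℕ => ((n.factorial : ℝ)⁻¹) • R ^ n :=
    NormedSpace.expSeries_summable' (𝕂 := ℝ) R
  set T : Matrix (Fin p) (Fin p) ℝ →ₗ[ℝ] ℝ := Matrix.traceLinearMap (Fin p) ℝ ℝ with hT
  have hTc : Continuous T := T.continuous_of_finiteDimensional
  set f : ℕ → ℝ := fun n => ((n.factorial : ℝ)⁻¹) * (R ^ n).trace with hf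
  have hTap : ∀ M : Matrix (Fin p) (Fin p) ℝ, T M = M.trace := fun _ => rfl
  have hfs : Summable f := by
    have := hsumm.map T.toAddMonoidHom hTc
    simpa [hf, Function.comp_def, hTap, smul_eq_mul] using this
  have htr : (NormedSpace.exp R).trace = ∑' n, f n := by
    rw [NormedSpace.exp_eq_tsum (𝕂 := ℝ)]
    have h1 := (T.toContinuousLinearMap).map_tsum hsumm
    simpa [hf, hTap, smul_eq_mul] using h1
  have htrdef : ∀ n : ℕ, (R ^ n).trace = ∑ i, (R ^ n) i i := fun _ => rfl
  have hf0 : f 0 = p := by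
    simp [hf, Matrix.trace_one]
  have hsplit : (NormedSpace.exp R).trace - p = ∑' n, f (n + 1) := by
    rw [htr, hfs.tsum_eq_zero_add, hf0]
    ring
  have hfnn : ∀ n, 0 ≤ f (n + 1) := by
    intro n
    refine mul_nonneg (inv_nonneg.2 (Nat.cast_nonneg _)) ?_
    rw [htrdef]
    exact Finset.sum_nonneg fun i _ => pow_entry_nonneg R hR _ i i
  have hS : 0 ≤ ∑' n, f (n + 1) := tsum_nonneg hfnn
  have hcomplex : (((NormedSpace.exp (fun j k => B j k * star (B j k)) :
      Matrix (Fin p) (Fin p) ℂ)).trace - p)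
      = (((NormedSpace.exp R).trace - p : ℝ) : ℂ) := by
    rw [hexp, htrace_map]
    push_cast
    ring
  have hrel : (fun k j : Fin p => B j k ≠ 0) = (fun x y : Fin p => R y x ≠ 0) := by
    funext a b
    simp [hRdef, Complex.normSq_eq_zero]
  refine ⟨by rw [hcomplex]; simp, by rw [hcomplex]; simpa [hsplit] using hS, ?_⟩
  rw [hcomplex, Complex.ofReal_eq_zero, hsplit]
  constructor
  · intro h0 j hcyc
    rw [hrel] at hcyc
    obtain ⟨n, hn⟩ := trans_pos R hR hcyc
    have hle : (R ^ (n + 1)) j j ≤ ∑ i, (R ^ (n + 1)) i i :=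
      Finset.single_le_sum (fun i _ => pow_entry_nonneg R hR _ i i) (Finset.mem_univ j)
    have hpos : 0 < f (n + 1) := by
      refine mul_pos (by positivity) ?_
      rw [htrdef]
      linarith
    have hsum' : Summable fun n => f (n + 1) := (summable_nat_add_iff 1).2 hfs
    have := hsum'.le_tsum n fun m _ => hfnn m
    rw [h0] at this
    linarith
  · intro hac
    have hz : ∀ n, f (n + 1) = (0 : ℝ) := by
      intro n
      have ht0 : (R ^ (n + 1)).trace = 0 := by
        rw [htrdef]
        refine Finset.sum_eq_zero fun i _ => ?_
        by_contra hne
        exact hac i (by rw [hrel]; exact entry_trans R n hne)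
      simp [hf, ht0]
    rw [funext hz, tsum_zero]

end aux

/-- For `B ∈ ℂ^{p×p}`, define `h(B) = tr(exp(B ⊙ B*)) − p`, where `⊙` is
the entrywise product and `B*` the entrywise conjugate.  Then `h(B)` is a nonnegative real
number, and `h(B) = 0` iff the directed graph with edge `k → j` whenever `B j k ≠ 0` is
acyclic. -/
theorem stmt3 (p : ℕ) (B : Matrix (Fin p) (Fin p) ℂ) :
    (((NormedSpace.exp (fun j k => B j k * star (B j k)) : Matrix (Fin p) (Fin p) ℂ)).trace
        - p).im = 0 ∧
    0 ≤ (((NormedSpace.exp (fun j k => B j k * star (B j k)) : Matrix (Fin p) (Fin p) ℂ)).trace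
        - p).re ∧
    ((((NormedSpace.exp (fun j k => B j k * star (B j k)) : Matrix (Fin p) (Fin p) ℂ)).trace
        - p) = 0 ↔
      ∀ j : Fin p, ¬ Relation.TransGen (fun k j : Fin p => B j k ≠ 0) j j) :=
  key p B
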